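/- Let d = 1 and let x : ℤ → ℝ be a Birkhoff sequence (for all k, l ∈ ℤ, either x_{i+k}+l ≥ x_i for all i, or x_{i+k}+l ≤ x_i for all i). Then the limit ω := lim_{n→∞} x_n/n exists and |x_i − x_0 − ωi| ≤ 1 for all i ∈ ℤ. -/

import Mathlib

/-- A bi-infinite sequence is Birkhoff if for all `k l : ℤ` the shifted sequence
`i ↦ a (i+k) + l` is everywhere `≤ a` or everywhere `≥ a`. -/
def BirkhoffSeq (a : ℤ → ℝ) : Prop :=
  ∀ k l : ℤ, (∀ i, a (i + k) + l ≤ a i) ∨ (∀ i, a i ≤ a (i + k) + l)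

/-- Iteration bound for a quasimorphism, natural exponents. -/
lemma qm_iter (F : ℤ → ℝ) (hF0 : F 0 = 0)
    (hq : ∀ m n : ℤ, |F (m + n) - F m - F n| ≤ 1) :
    ∀ (k : ℕ) (n : ℤ), |F ((k : ℤ) * n) - (k : ℝ) * F n| ≤ (k : ℝ) := by
  intro k
  induction k with
  | zero => intro n; simp [hF0]
  | succ k ih =>
    intro n
    have harg : ((k + 1 : ℕ) : ℤ) * n = (k : ℤ) * n + n := by push_cast; ring
    have h1 := hq ((k : ℤ) * n) n
    have h2 := ih n
    rw [harg]
    rw [abs_le] at h1 h2 ⊢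
    push_cast
    constructor <;> nlinarith [h1.1, h1.2, h2.1, h2.2]

/-- Iteration bound for a quasimorphism, integer exponents (with loss 1). -/
lemma qm_iterZ (F : ℤ → ℝ) (hF0 : F 0 = 0)
    (hq : ∀ m n : ℤ, |F (m + n) - F m - F n| ≤ 1) :
    ∀ (k n : ℤ), |F (k * n) - (k : ℝ) * F n| ≤ |(k : ℝ)| + 1 := by
  have hneg : ∀ a : ℤ, |F (-a) + F a| ≤ 1 := by
    intro a
    have := hq a (-a)
    simp only [add_neg_cancel, hF0] at this
    calc |F (-a) + F a| = |F 0 - F a - F (-a)| := by rw [hF0]; rw [abs_sub_comm]; ring_nf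
      _ ≤ 1 := by rw [hF0]; simpa using this
  intro k n
  rcases le_or_gt 0 k with hk | hk
  · obtain ⟨j, rfl⟩ : ∃ j : ℕ, k = (j : ℤ) := ⟨k.toNat, (Int.toNat_of_nonneg hk).symm⟩
    have hit : |F ((j : ℤ) * n) - (((j : ℤ)) : ℝ) * F n| ≤ (((j : ℤ)) : ℝ) := by
      exact_mod_cast qm_iter F hF0 hq j n
    have habs : |(((j : ℤ)) : ℝ)| = (((j : ℤ)) : ℝ) := abs_of_nonneg (by positivity)
    rw [habs]
    linarith
  · obtain ⟨j, hj⟩ : ∃ j : ℕ, -k = (j : ℤ) := ⟨(-k).toNat, (Int.toNat_of_nonneg (by omega)).symm⟩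
    have hiter := qm_iter F hF0 hq j n
    have hneg' := hneg ((j : ℤ) * n)
    have hkn : k * n = -((j : ℤ) * n) := by rw [← hj]; ring
    have hkr : (k : ℝ) = -(j : ℝ) := by
      have : ((-k : ℤ) : ℝ) = ((j : ℤ) : ℝ) := by rw [hj]
      push_cast at this; linarith
    have habs : |(k : ℝ)| = (j : ℝ) := by
      rw [hkr, abs_neg]; exact abs_of_nonneg (by positivity)
    rw [hkn, habs, hkr]
    have : F (-((j : ℤ) * n)) - -(j : ℝ) * F n
        = (F (-((j : ℤ) * n)) + F ((j : ℤ) * n)) - (F ((j : ℤ) * n) - (j : ℝ) * F n) := by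
      ring
    rw [this]
    calc |_ - _| ≤ |F (-((j : ℤ) * n)) + F ((j : ℤ) * n)| + |F ((j : ℤ) * n) - (j : ℝ) * F n| :=
          abs_sub _ _
      _ ≤ 1 + (j : ℝ) := add_le_add hneg' hiter
      _ = (j : ℝ) + 1 := by ring

theorem stmt1 (x : ℤ → ℝ) (hx : BirkhoffSeq x) :
    ∃ ω : ℝ, Filter.Tendsto (fun n : ℕ => x n / n) Filter.atTop (nhds ω) ∧
      ∀ i : ℤ, |x i - x 0 - ω * i| ≤ 1 := by
  classical
  -- key comparison lemma from the Birkhoff property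
  have key : ∀ k i j : ℤ, x (i + k) - x i ≤ x (j + k) - x j + 1 := by
    intro k i j
    by_contra h
    push_neg at h
    set m : ℤ := ⌊x (j + k) - x j⌋ + 1 with hm
    have hm1 : (m : ℝ) ≤ x (j + k) - x j + 1 := by
      rw [hm]; push_cast
      linarith [Int.floor_le (x (j + k) - x j)]
    have hm2 : x (j + k) - x j < (m : ℝ) := by
      rw [hm]; push_cast
      linarith [Int.lt_floor_add_one (x (j + k) - x j)]
    rcases hx k (-m) with H | H
    · have hi := H i
      push_cast at hi
      linarith
    · have hj := H j
      push_cast at hj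
      linarith
  set F : ℤ → ℝ := fun i => x i - x 0 with hFdef
  have hF0 : F 0 = 0 := by simp [hFdef]
  have hq : ∀ m n : ℤ, |F (m + n) - F m - F n| ≤ 1 := by
    intro m n
    have h1 := key n m 0
    have h2 := key n 0 m
    simp only [zero_add] at h1 h2
    rw [abs_le]
    constructor <;> simp only [hFdef] <;> linarith
  have iter := qm_iter F hF0 hq
  have iterZ := qm_iterZ F hF0 hq
  -- the sequence F n / n is Cauchy
  set u : ℕ → ℝ := fun n => F n / n with hudef
  have hdiff : ∀ m n : ℕ, 1 ≤ m → 1 ≤ n → |u m - u n| ≤ 1 / m + 1 / n := by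
    intro m n hm hn
    have hmr : (0 : ℝ) < m := by exact_mod_cast hm
    have hnr : (0 : ℝ) < n := by exact_mod_cast hn
    have A := iter m (n : ℤ)
    have B := iter n (m : ℤ)
    have hcomm : ((m : ℤ) : ℤ) * n = (n : ℤ) * m := by ring
    have hnum : |(n : ℝ) * F m - (m : ℝ) * F n| ≤ (m : ℝ) + n := by
      have : (n : ℝ) * F m - (m : ℝ) * F n
          = (F ((m : ℤ) * n) - (m : ℝ) * F n) - (F ((n : ℤ) * m) - (n : ℝ) * F m) := by
        rw [hcomm]; ring
      rw [this]
      calc |_ - _| ≤ |F ((m : ℤ) * n) - (m : ℝ) * F n| + |F ((n : ℤ) * m) - (n : ℝ) * F m| :=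
            abs_sub _ _
        _ ≤ (m : ℝ) + n := add_le_add A B
    have heq : u m - u n = ((n : ℝ) * F m - (m : ℝ) * F n) / (m * n) := by
      simp only [hudef]
      field_simp
    rw [heq, abs_div, abs_of_pos (by positivity : (0:ℝ) < (m : ℝ) * n)]
    rw [div_le_iff₀ (by positivity)]
    have : (1 / (m : ℝ) + 1 / n) * ((m : ℝ) * n) = (m : ℝ) + n := by
      field_simp; ring
    rw [this]
    exact hnum
  have hcauchy : CauchySeq u := by
    rw [Metric.cauchySeq_iff']
    intro ε hε
    obtain ⟨N0, hN0⟩ := exists_nat_one_div_lt (half_pos hε)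
    refine ⟨N0 + 1, fun n hn => ?_⟩
    have h1 : (1 : ℕ) ≤ N0 + 1 := by omega
    have h2 : (1 : ℕ) ≤ n := by omega
    have hle : (1 : ℝ) / n ≤ 1 / (N0 + 1) := by
      apply one_div_le_one_div_of_le (by positivity)
      exact_mod_cast hn
    have := hdiff n (N0 + 1) h2 h1
    rw [Real.dist_eq]
    push_cast at hN0 hle this ⊢
    linarith
  obtain ⟨ω, hω⟩ := cauchySeq_tendsto_of_complete hcauchy
  refine ⟨ω, ?_, ?_⟩
  · -- x n / n tends to ω
    have heq : ∀ n : ℕ, x n / n = u n + x 0 / n := by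
      intro n
      simp only [hudef]
      rw [← add_div]; simp only [hFdef, sub_add_cancel]
    have h2 : Filter.Tendsto (fun n : ℕ => x 0 / (n : ℝ)) Filter.atTop (nhds 0) :=
      tendsto_const_div_atTop_nhds_zero_nat (x 0)
    have := hω.add h2
    rw [add_zero] at this
    exact this.congr (fun n => (heq n).symm)
  · -- the bound
    intro i
    rcases eq_or_ne i 0 with rfl | hi
    · simp
    have hir : ((i : ℝ)) ≠ 0 := by exact_mod_cast hi
    have hia : (0 : ℝ) < |(i : ℝ)| := abs_pos.mpr hir
    -- |F i / i - ω| ≤ 1 / |i|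
    have hbound : |F i / i - ω| ≤ 1 / |(i : ℝ)| := by
      have hf : Filter.Tendsto (fun n : ℕ => |F i / i - u n|) Filter.atTop
          (nhds |F i / i - ω|) := ((tendsto_const_nhds.sub hω).abs)
      have hg : Filter.Tendsto
          (fun n : ℕ => 1 / |(i : ℝ)| + 1 / (n : ℝ) + (1 / |(i : ℝ)|) * (1 / (n : ℝ)))
          Filter.atTop (nhds (1 / |(i : ℝ)|)) := by
        have h1 : Filter.Tendsto (fun n : ℕ => 1 / (n : ℝ)) Filter.atTop (nhds 0) :=
          tendsto_one_div_atTop_nhds_zero_nat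
        have h2 := (h1.const_add (1 / |(i : ℝ)|)).add (h1.const_mul (1 / |(i : ℝ)|))
        simpa using h2
      refine le_of_tendsto_of_tendsto hf hg ?_
      filter_upwards [Filter.eventually_ge_atTop 1] with n hn
      have hnr : (0 : ℝ) < n := by exact_mod_cast hn
      have A := iter n i
      have B := iterZ i (n : ℤ)
      have hcomm : (n : ℤ) * i = i * (n : ℤ) := by ring
      have hnum : |(n : ℝ) * F i - (i : ℝ) * F n| ≤ (n : ℝ) + |(i : ℝ)| + 1 := by
        have heq2 : (n : ℝ) * F i - (i : ℝ) * F n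
            = (F (i * (n : ℤ)) - (i : ℝ) * F n) - (F ((n : ℤ) * i) - (n : ℝ) * F i) := by
          rw [hcomm]; ring
        rw [heq2]
        calc |_ - _| ≤ |F (i * (n : ℤ)) - (i : ℝ) * F n| + |F ((n : ℤ) * i) - (n : ℝ) * F i| :=
              abs_sub _ _
          _ ≤ (|(i : ℝ)| + 1) + n := add_le_add B A
          _ = (n : ℝ) + |(i : ℝ)| + 1 := by ring
      have heq3 : F i / i - u n = ((n : ℝ) * F i - (i : ℝ) * F n) / (i * n) := by
        simp only [hudef]
        field_simp
      rw [heq3, abs_div, abs_mul, abs_of_pos hnr]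
      rw [div_le_iff₀ (by positivity)]
      have hrhs : (1 / |(i : ℝ)| + 1 / (n : ℝ) + (1 / |(i : ℝ)|) * (1 / (n : ℝ)))
          * (|(i : ℝ)| * n) = (n : ℝ) + |(i : ℝ)| + 1 := by
        field_simp
        try ring
      rw [hrhs]
      exact hnum
    have hsplit : x i - x 0 - ω * i = (F i / i - ω) * i := by
      simp only [hFdef]
      field_simp
      try ring
    rw [hsplit, abs_mul]
    calc |F i / i - ω| * |(i : ℝ)| ≤ (1 / |(i : ℝ)|) * |(i : ℝ)| :=
          mul_le_mul_of_nonneg_right hbound (abs_nonneg _)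
      _ = 1 := by field_simp
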